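/- Let K ≥ 1, α ≥ 0, and x ∈ ℝ^K with x_i > 0 and α x_i ≤ 1 for all i. Define H_α(y) = (∑_{j=1}^K y_j e^{-α y_j}) / (∑_{i=1}^K e^{-α y_i}) for y in a neighborhood of x. Then for every direction v ∈ ℝ^K, the second derivative at t = 0 of the function t ↦ H_α(x + t·v) is nonpositive; equivalently, the Hessian quadratic form of H_α at x satisfies vᵀ ∇²H_α(x) v ≤ 0 for all v ∈ ℝ^K. -/

import Mathlib

/-- Key step of Lemma 1: at any point `x` with `0 < x_i` and `α x_i ≤ 1` for all `i`,
the second derivative at `t = 0` of `t ↦ H_α(x + t v)` is nonpositive for every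
direction `v`, i.e. the Hessian quadratic form of `H_α` at `x` is negative
semidefinite. -/
theorem stmt_3 (K : ℕ) (hK : 1 ≤ K) (α : ℝ) (hα : 0 ≤ α)
    (x : Fin K → ℝ) (hx : ∀ i, 0 < x i ∧ α * x i ≤ 1)
    (v : Fin K → ℝ) :
    deriv (deriv (fun t : ℝ =>
        (∑ j, (x j + t * v j) * Real.exp (-α * (x j + t * v j)))
          / (∑ i, Real.exp (-α * (x i + t * v i))))) 0 ≤ 0 := by
  haveI : Nonempty (Fin K) := ⟨⟨0, hK⟩⟩
  -- derivative of the linear inner function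
  have hy : ∀ (i : Fin K) (t : ℝ), HasDerivAt (fun s : ℝ => x i + s * v i) (v i) t := by
    intro i t
    simpa using ((hasDerivAt_id t).mul_const (v i)).const_add (x i)
  -- derivative of the exponential factor
  have hE : ∀ (i : Fin K) (t : ℝ),
      HasDerivAt (fun s : ℝ => Real.exp (-α * (x i + s * v i)))
        (-(α * v i) * Real.exp (-α * (x i + t * v i))) t := by
    intro i t
    have h1 : HasDerivAt (fun s : ℝ => -α * (x i + s * v i)) (-(α * v i)) t := by
      have := (hy i t).const_mul (-α)
      exact this.congr_deriv (by ring)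
    have h2 := (Real.hasDerivAt_exp (-α * (x i + t * v i))).comp t h1
    exact h2.congr_deriv (by ring)
  -- derivative of each numerator term
  have hNt : ∀ (j : Fin K) (t : ℝ),
      HasDerivAt (fun s : ℝ => (x j + s * v j) * Real.exp (-α * (x j + s * v j)))
        ((v j - α * v j * (x j + t * v j)) * Real.exp (-α * (x j + t * v j))) t := by
    intro j t
    have := (hy j t).mul (hE j t)
    exact this.congr_deriv (by ring)
  -- sums
  have hD : ∀ t : ℝ, HasDerivAt (fun s : ℝ => ∑ i, Real.exp (-α * (x i + s * v i)))
      (∑ i, -(α * v i) * Real.exp (-α * (x i + t * v i))) t :=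
    fun t => HasDerivAt.fun_sum fun i _ => hE i t
  have hN : ∀ t : ℝ, HasDerivAt (fun s : ℝ => ∑ j, (x j + s * v j) * Real.exp (-α * (x j + s * v j)))
      (∑ j, (v j - α * v j * (x j + t * v j)) * Real.exp (-α * (x j + t * v j))) t :=
    fun t => HasDerivAt.fun_sum fun j _ => hNt j t
  have hDpos : ∀ t : ℝ, 0 < ∑ i, Real.exp (-α * (x i + t * v i)) :=
    fun t => Finset.sum_pos (fun i _ => Real.exp_pos _) Finset.univ_nonempty
  -- first derivative as an explicit function
  have hf1 : deriv (fun t : ℝ =>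
        (∑ j, (x j + t * v j) * Real.exp (-α * (x j + t * v j)))
          / (∑ i, Real.exp (-α * (x i + t * v i))))
      = fun t : ℝ =>
        ((∑ j, (v j - α * v j * (x j + t * v j)) * Real.exp (-α * (x j + t * v j)))
            * (∑ i, Real.exp (-α * (x i + t * v i)))
          - (∑ j, (x j + t * v j) * Real.exp (-α * (x j + t * v j)))
            * (∑ i, -(α * v i) * Real.exp (-α * (x i + t * v i))))
          / (∑ i, Real.exp (-α * (x i + t * v i))) ^ 2 := by
    funext t
    exact ((hN t).div (hD t) (hDpos t).ne').deriv
  -- second derivatives of each piece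
  have hN2t : ∀ (j : Fin K) (t : ℝ),
      HasDerivAt (fun s : ℝ => (v j - α * v j * (x j + s * v j)) * Real.exp (-α * (x j + s * v j)))
        ((α ^ 2 * v j ^ 2 * (x j + t * v j) - 2 * α * v j ^ 2) * Real.exp (-α * (x j + t * v j))) t := by
    intro j t
    have ha : HasDerivAt (fun s : ℝ => v j - α * v j * (x j + s * v j)) (-(α * v j * v j)) t :=
      ((hy j t).const_mul (α * v j)).const_sub (v j)
    have := ha.mul (hE j t)
    exact this.congr_deriv (by ring)
  have hD2t : ∀ (i : Fin K) (t : ℝ),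
      HasDerivAt (fun s : ℝ => -(α * v i) * Real.exp (-α * (x i + s * v i)))
        ((α * v i) ^ 2 * Real.exp (-α * (x i + t * v i))) t := by
    intro i t
    have := (hE i t).const_mul (-(α * v i))
    exact this.congr_deriv (by ring)
  have hN2 : HasDerivAt (fun s : ℝ => ∑ j, (v j - α * v j * (x j + s * v j)) * Real.exp (-α * (x j + s * v j)))
      (∑ j, (α ^ 2 * v j ^ 2 * (x j + (0:ℝ) * v j) - 2 * α * v j ^ 2) * Real.exp (-α * (x j + (0:ℝ) * v j))) 0 :=
    HasDerivAt.fun_sum fun j _ => hN2t j 0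
  have hD2 : HasDerivAt (fun s : ℝ => ∑ i, -(α * v i) * Real.exp (-α * (x i + s * v i)))
      (∑ i, (α * v i) ^ 2 * Real.exp (-α * (x i + (0:ℝ) * v i))) 0 :=
    HasDerivAt.fun_sum fun i _ => hD2t i 0
  -- second derivative of the quotient at 0
  have hu := ((hN2.mul (hD 0)).sub ((hN 0).mul hD2))
  have hw := (hD 0).pow 2
  have hg2 := hu.div hw (pow_ne_zero 2 (hDpos 0).ne')
  rw [hf1]
  erw [hg2.deriv]
  simp only [Pi.pow_apply, Pi.mul_apply, Pi.sub_apply, zero_mul, add_zero, Nat.cast_ofNat, Nat.reduceSub, pow_one]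
  -- abbreviations for the sums at 0
  set s0 : ℝ := ∑ i, Real.exp (-α * x i) with hs0def
  set s1 : ℝ := ∑ i, v i * Real.exp (-α * x i) with hs1def
  set s2 : ℝ := ∑ i, v i ^ 2 * Real.exp (-α * x i) with hs2def
  set t0 : ℝ := ∑ i, x i * Real.exp (-α * x i) with ht0def
  set t1 : ℝ := ∑ i, v i * x i * Real.exp (-α * x i) with ht1def
  set t2 : ℝ := ∑ i, v i ^ 2 * x i * Real.exp (-α * x i) with ht2def
  have hrw1 : (∑ j, (v j - α * v j * x j) * Real.exp (-α * x j)) = s1 - α * t1 := by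
    rw [Finset.sum_congr rfl fun (j : Fin K) _ =>
      (by ring : (v j - α * v j * x j) * Real.exp (-α * x j)
        = v j * Real.exp (-α * x j) - α * (v j * x j * Real.exp (-α * x j)))]
    rw [Finset.sum_sub_distrib, ← Finset.mul_sum, ← hs1def, ← ht1def]
  have hrw2 : (∑ j, -(α * v j) * Real.exp (-α * x j)) = -(α * s1) := by
    rw [Finset.sum_congr rfl fun (j : Fin K) _ =>
      (by ring : -(α * v j) * Real.exp (-α * x j) = -(α * (v j * Real.exp (-α * x j))))]
    rw [Finset.sum_neg_distrib, ← Finset.mul_sum, ← hs1def]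
  have hrw3 : (∑ j, (α ^ 2 * v j ^ 2 * x j - 2 * α * v j ^ 2) * Real.exp (-α * x j))
      = α ^ 2 * t2 - 2 * α * s2 := by
    rw [Finset.sum_congr rfl fun (j : Fin K) _ =>
      (by ring : (α ^ 2 * v j ^ 2 * x j - 2 * α * v j ^ 2) * Real.exp (-α * x j)
        = α ^ 2 * (v j ^ 2 * x j * Real.exp (-α * x j)) - 2 * α * (v j ^ 2 * Real.exp (-α * x j)))]
    rw [Finset.sum_sub_distrib, ← Finset.mul_sum, ← Finset.mul_sum, ← ht2def, ← hs2def]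
  have hrw4 : (∑ j, (α * v j) ^ 2 * Real.exp (-α * x j)) = α ^ 2 * s2 := by
    rw [Finset.sum_congr rfl fun (j : Fin K) _ =>
      (by ring : (α * v j) ^ 2 * Real.exp (-α * x j) = α ^ 2 * (v j ^ 2 * Real.exp (-α * x j)))]
    rw [← Finset.mul_sum, ← hs2def]
  rw [hrw1, hrw2, hrw3, hrw4]
  -- basic facts
  have hs0 : 0 < s0 := Finset.sum_pos (fun i _ => Real.exp_pos _) Finset.univ_nonempty
  have ht0 : 0 ≤ t0 :=
    Finset.sum_nonneg fun i _ => mul_nonneg (hx i).1.le (Real.exp_pos _).le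
  -- quadratic-form facts (mean-shift argument)
  have hUid : (∑ i, (s0 * v i - s1) ^ 2 * Real.exp (-α * x i))
      = s0 ^ 2 * s2 - 2 * s0 * s1 * s1 + s1 ^ 2 * s0 := by
    rw [Finset.sum_congr rfl fun (i : Fin K) _ =>
      (by ring : (s0 * v i - s1) ^ 2 * Real.exp (-α * x i)
        = s0 ^ 2 * (v i ^ 2 * Real.exp (-α * x i))
          - 2 * s0 * s1 * (v i * Real.exp (-α * x i)) + s1 ^ 2 * Real.exp (-α * x i))]
    rw [Finset.sum_add_distrib, Finset.sum_sub_distrib, ← Finset.mul_sum, ← Finset.mul_sum,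
      ← Finset.mul_sum, ← hs2def, ← hs1def, ← hs0def]
  have hWid : (∑ i, α * x i * ((s0 * v i - s1) ^ 2 * Real.exp (-α * x i)))
      = α * s0 ^ 2 * t2 - 2 * α * s0 * s1 * t1 + α * s1 ^ 2 * t0 := by
    rw [Finset.sum_congr rfl fun (i : Fin K) _ =>
      (by ring : α * x i * ((s0 * v i - s1) ^ 2 * Real.exp (-α * x i))
        = α * s0 ^ 2 * (v i ^ 2 * x i * Real.exp (-α * x i))
          - 2 * α * s0 * s1 * (v i * x i * Real.exp (-α * x i))
          + α * s1 ^ 2 * (x i * Real.exp (-α * x i)))]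
    rw [Finset.sum_add_distrib, Finset.sum_sub_distrib, ← Finset.mul_sum, ← Finset.mul_sum,
      ← Finset.mul_sum, ← ht2def, ← ht1def, ← ht0def]
  have hU : 0 ≤ s0 ^ 2 * s2 - 2 * s0 * s1 * s1 + s1 ^ 2 * s0 := by
    rw [← hUid]
    exact Finset.sum_nonneg fun i _ => mul_nonneg (sq_nonneg _) (Real.exp_pos _).le
  have hW : α * s0 ^ 2 * t2 - 2 * α * s0 * s1 * t1 + α * s1 ^ 2 * t0
      ≤ s0 ^ 2 * s2 - 2 * s0 * s1 * s1 + s1 ^ 2 * s0 := by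
    rw [← hUid, ← hWid]
    refine Finset.sum_le_sum fun i _ => ?_
    exact mul_le_of_le_one_left (mul_nonneg (sq_nonneg _) (Real.exp_pos _).le) (hx i).2
  -- conclude
  apply div_nonpos_of_nonpos_of_nonneg
  · have hm1 : α * (s0 * (α * s0 ^ 2 * t2 - 2 * α * s0 * s1 * t1 + α * s1 ^ 2 * t0))
        ≤ α * (s0 * (s0 ^ 2 * s2 - 2 * s0 * s1 * s1 + s1 ^ 2 * s0)) :=
      mul_le_mul_of_nonneg_left (mul_le_mul_of_nonneg_left hW hs0.le) hα
    have hm2 : 0 ≤ α * (s0 * (s0 ^ 2 * s2 - 2 * s0 * s1 * s1 + s1 ^ 2 * s0)) :=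
      mul_nonneg hα (mul_nonneg hs0.le hU)
    have hm3 : 0 ≤ α * (α * (t0 * (s0 ^ 2 * s2 - 2 * s0 * s1 * s1 + s1 ^ 2 * s0))) :=
      mul_nonneg hα (mul_nonneg hα (mul_nonneg ht0 hU))
    linarith [hm1, hm2, hm3]
  · positivity
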